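/- Let d ≥ 1, let U : ℝ^d → ℝ be continuously differentiable with ∫_{ℝ^d} (1 + ‖∇U(x)‖) e^{−U(x)} dx < ∞, let λ_c > 0, and let μ_ν be a rotation invariant probability measure on ℝ^d with ∫ ‖y‖ dμ_ν(y) < ∞. For x, y ∈ ℝ^d set R(x,y) = R_{∇U(x)}(y). Then for every continuously differentiable compactly supported f : ℝ^d × ℝ^d → ℝ, ∫_{ℝ^d} ∫_{ℝ^d} [ ⟨y, ∇_x f(x,y)⟩ + (⟨y, ∇U(x)⟩)₊ (f(x, R(x,y)) − f(x,y)) + λ_c ( ∫_{ℝ^d} f(x,w) dμ_ν(w) − f(x,y) ) ] e^{−U(x)} dμ_ν(y) dx = 0. -/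

import Mathlib

open MeasureTheory
open scoped InnerProductSpace

/-- The bounce map `R_g(y) = y - 2 (⟪g,y⟫/‖g‖²) g` (identity when `g = 0`). -/
noncomputable def bounce {E : Type*} [NormedAddCommGroup E] [InnerProductSpace ℝ E]
    (g y : E) : E :=
  letI := Classical.dec (g = 0)
  if g = 0 then y else y - ((2 * ⟪g, y⟫_ℝ) / ‖g‖ ^ 2) • g

section aux
variable {E : Type*} [NormedAddCommGroup E] [InnerProductSpace ℝ E]

lemma inner_gradient_eq [CompleteSpace E] (h : E → ℝ) (x v : E) :
    ⟪v, gradient h x⟫_ℝ = fderiv ℝ h x v := by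
  rw [real_inner_comm, gradient, InnerProductSpace.toDual_symm_apply]

lemma norm_gradient_eq [CompleteSpace E] (h : E → ℝ) (x : E) :
    ‖gradient h x‖ = ‖fderiv ℝ h x‖ :=
  (InnerProductSpace.toDual ℝ E).symm.norm_map _

lemma bounce_eq_reflection [CompleteSpace E] {g : E} (hg : g ≠ 0) (y : E) :
    bounce g y = (ℝ ∙ g)ᗮ.reflection y := by
  rw [bounce, if_neg hg, Submodule.reflection_apply, Submodule.starProjection_orthogonal_val,
    Submodule.starProjection_singleton]
  push_cast
  rw [smul_sub, two_smul]
  rw [show (2 * ⟪g, y⟫_ℝ / ‖g‖ ^ 2) • g = (⟪g, y⟫_ℝ / ‖g‖ ^ 2) • g + (⟪g, y⟫_ℝ / ‖g‖ ^ 2) • g by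
    rw [← add_smul]; ring_nf]
  abel

lemma inner_bounce (g y : E) : ⟪g, bounce g y⟫_ℝ = -⟪g, y⟫_ℝ := by
  by_cases hg : g = 0
  · simp [bounce, hg]
  · rw [bounce, if_neg hg, inner_sub_right, real_inner_smul_right,
      real_inner_self_eq_norm_sq]
    have : ‖g‖ ^ 2 ≠ 0 := pow_ne_zero _ (norm_ne_zero_iff.mpr hg)
    field_simp
    ring

lemma continuous_bounce (g : E) : Continuous (bounce g) := by
  by_cases hg : g = 0
  · have : bounce g = id := by funext y; simp [bounce, hg]
    rw [this]; exact continuous_id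
  · have : bounce g = fun y => y - ((2 * ⟪g, y⟫_ℝ) / ‖g‖ ^ 2) • g := by
      funext y; simp [bounce, hg]
    rw [this]
    exact continuous_id.sub ((((continuous_const.mul
      ((continuous_const : Continuous fun _ : E => g).inner continuous_id)).div_const
      _)).smul continuous_const)

end aux

set_option maxHeartbeats 2000000 in
theorem bps_invariance
    {d : ℕ} (hd : 1 ≤ d)
    (U : EuclideanSpace ℝ (Fin d) → ℝ) (hU : ContDiff ℝ 1 U)
    (hUint : Integrable (fun x => (1 + ‖gradient U x‖) * Real.exp (-U x)))
    (lamc : ℝ) (hlamc : 0 < lamc)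
    (μν : Measure (EuclideanSpace ℝ (Fin d))) [IsProbabilityMeasure μν]
    (hrot : ∀ O : EuclideanSpace ℝ (Fin d) ≃ₗᵢ[ℝ] EuclideanSpace ℝ (Fin d),
      Measure.map O μν = μν)
    (hmom : Integrable (fun y => ‖y‖) μν)
    (f : EuclideanSpace ℝ (Fin d) × EuclideanSpace ℝ (Fin d) → ℝ)
    (hf : ContDiff ℝ 1 f) (hfc : HasCompactSupport f) :
    ∫ x, ∫ y, (⟪y, gradient (fun x' => f (x', y)) x⟫_ℝ
        + max ⟪y, gradient U x⟫_ℝ 0 * (f (x, bounce (gradient U x) y) - f (x, y))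
        + lamc * ((∫ w, f (x, w) ∂μν) - f (x, y))) * Real.exp (-U x) ∂μν = 0 := by
  -- basic facts
  have hfd : Differentiable ℝ f := hf.differentiable one_ne_zero
  have hUd : Differentiable ℝ U := hU.differentiable one_ne_zero
  obtain ⟨Cf, hCf⟩ := hfc.exists_bound_of_continuous hf.continuous
  have hdf_cont : Continuous (fderiv ℝ f) := hf.continuous_fderiv one_ne_zero
  obtain ⟨Cd, hCd⟩ := (hfc.fderiv ℝ).exists_bound_of_continuous hdf_cont
  have hCf0 : 0 ≤ Cf := (norm_nonneg _).trans (hCf 0)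
  have hCd0 : 0 ≤ Cd := (norm_nonneg _).trans (hCd 0)
  have hdU_cont : Continuous (fderiv ℝ U) := hU.continuous_fderiv one_ne_zero
  set G : EuclideanSpace ℝ (Fin d) → ℝ := fun x => Real.exp (-U x) with hG
  have hG_cont : Continuous G := Real.continuous_exp.comp (hU.continuous.neg)
  have hG_pos : ∀ x, 0 < G x := fun x => Real.exp_pos _
  -- derivative of G
  have hG_deriv : ∀ x, HasFDerivAt G (Real.exp (-U x) • (-(fderiv ℝ U x))) x := by
    intro x
    exact (Real.hasDerivAt_exp (-U x)).comp_hasFDerivAt x ((hUd x).hasFDerivAt).neg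
  have hG_diff : Differentiable ℝ G := fun x => (hG_deriv x).differentiableAt
  -- partial derivative in the first variable
  have hpart : ∀ (x y : EuclideanSpace ℝ (Fin d)), HasFDerivAt (fun x' => f (x', y))
      ((fderiv ℝ f (x, y)).comp
        ((ContinuousLinearMap.id ℝ (EuclideanSpace ℝ (Fin d))).prod 0)) x := by
    intro x y
    exact (hfd (x, y)).hasFDerivAt.comp x ((hasFDerivAt_id x).prodMk (hasFDerivAt_const y x))
  set D : EuclideanSpace ℝ (Fin d) × EuclideanSpace ℝ (Fin d) → ℝ :=
    fun p => fderiv ℝ f p (p.2, 0) with hD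
  have hD_cont : Continuous D := by
    have h0 : Continuous fun p : EuclideanSpace ℝ (Fin d) × EuclideanSpace ℝ (Fin d) =>
        (fderiv ℝ f p, (p.2, (0 : EuclideanSpace ℝ (Fin d)))) :=
      hdf_cont.prodMk (continuous_snd.prodMk continuous_const)
    exact isBoundedBilinearMap_apply.continuous.comp h0
  have hD_bound : ∀ p : EuclideanSpace ℝ (Fin d) × EuclideanSpace ℝ (Fin d),
      ‖D p‖ ≤ Cd * ‖p.2‖ := by
    intro p
    calc ‖fderiv ℝ f p (p.2, 0)‖ ≤ ‖fderiv ℝ f p‖ * ‖(p.2, (0 : EuclideanSpace ℝ (Fin d)))‖ :=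
          (fderiv ℝ f p).le_opNorm _
      _ ≤ Cd * ‖p.2‖ := by
          have h1 : ‖(p.2, (0 : EuclideanSpace ℝ (Fin d)))‖ = ‖p.2‖ := by
            simp [Prod.norm_def]
          rw [h1]
          exact mul_le_mul_of_nonneg_right (hCd p) (norm_nonneg _)
  have hA : ∀ (x y : EuclideanSpace ℝ (Fin d)),
      ⟪y, gradient (fun x' => f (x', y)) x⟫_ℝ = D (x, y) := by
    intro x y
    rw [inner_gradient_eq, (hpart x y).fderiv]
    simp [hD]
  have haU : ∀ (x y : EuclideanSpace ℝ (Fin d)),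
      ⟪y, gradient U x⟫_ℝ = fderiv ℝ U x y := fun x y => inner_gradient_eq U x y
  -- the function appearing after the y-integral simplification
  set φ : EuclideanSpace ℝ (Fin d) × EuclideanSpace ℝ (Fin d) → ℝ :=
    fun p => (D p - fderiv ℝ U p.1 p.2 * f p) * G p.1 with hφ
  have hφ_cont : Continuous φ := by
    have h1 : Continuous fun p : EuclideanSpace ℝ (Fin d) × EuclideanSpace ℝ (Fin d) =>
        fderiv ℝ U p.1 p.2 := by
      have h0 : Continuous fun p : EuclideanSpace ℝ (Fin d) × EuclideanSpace ℝ (Fin d) =>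
          (fderiv ℝ U p.1, p.2) := (hdU_cont.comp continuous_fst).prodMk continuous_snd
      exact isBoundedBilinearMap_apply.continuous.comp h0
    exact ((hD_cont.sub (h1.mul hf.continuous)).mul (hG_cont.comp continuous_fst))
  have hnormU : ∀ x : EuclideanSpace ℝ (Fin d), ‖fderiv ℝ U x‖ = ‖gradient U x‖ := fun x =>
    (norm_gradient_eq U x).symm
  set M : ℝ := Cd + Cf with hM
  have hφ_bound : ∀ p : EuclideanSpace ℝ (Fin d) × EuclideanSpace ℝ (Fin d),
      ‖φ p‖ ≤ M * ((1 + ‖gradient U p.1‖) * G p.1) * ‖p.2‖ := by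
    intro p
    have h1 : ‖D p - fderiv ℝ U p.1 p.2 * f p‖ ≤ Cd * ‖p.2‖ + ‖gradient U p.1‖ * ‖p.2‖ * Cf := by
      refine (norm_sub_le _ _).trans ?_
      gcongr
      · exact hD_bound p
      · rw [norm_mul]
        have h2 : ‖fderiv ℝ U p.1 p.2‖ ≤ ‖gradient U p.1‖ * ‖p.2‖ := by
          rw [← hnormU]; exact (fderiv ℝ U p.1).le_opNorm _
        exact mul_le_mul h2 (hCf p) (norm_nonneg _) (by positivity)
    have hGp : ‖φ p‖ = ‖D p - fderiv ℝ U p.1 p.2 * f p‖ * G p.1 := by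
      rw [hφ, norm_mul, Real.norm_of_nonneg (hG_pos p.1).le]
    rw [hGp]
    have h3 : (Cd * ‖p.2‖ + ‖gradient U p.1‖ * ‖p.2‖ * Cf) * G p.1
        ≤ M * ((1 + ‖gradient U p.1‖) * G p.1) * ‖p.2‖ := by
      rw [hM]
      have he := (hG_pos p.1).le
      have ht := norm_nonneg p.2
      have hn := norm_nonneg (gradient U p.1)
      nlinarith [mul_nonneg (mul_nonneg hCf0 ht) he,
        mul_nonneg (mul_nonneg (mul_nonneg hCd0 hn) ht) he]
    exact le_trans (mul_le_mul_of_nonneg_right h1 (hG_pos p.1).le) h3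
  -- integrability of exp(-U)
  have hexp_int : Integrable G := by
    refine hUint.mono' (hG_cont.aestronglyMeasurable) (Filter.Eventually.of_forall fun x => ?_)
    rw [Real.norm_of_nonneg (hG_pos x).le]
    have h4 : (0:ℝ) ≤ ‖gradient U x‖ := norm_nonneg _
    have h5 := (hG_pos x).le
    nlinarith [mul_nonneg h4 h5]
  -- joint integrability of φ
  have hφ_int : Integrable φ (volume.prod μν) := by
    have hmaj : Integrable (fun p : EuclideanSpace ℝ (Fin d) × EuclideanSpace ℝ (Fin d) =>
        (M * ((1 + ‖gradient U p.1‖) * G p.1)) * ‖p.2‖) (volume.prod μν) :=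
      (hUint.const_mul M).mul_prod hmom
    refine hmaj.mono' (hφ_cont.aestronglyMeasurable) (Filter.Eventually.of_forall fun p => ?_)
    exact hφ_bound p
  -- Step 1: the inner integral equals ∫ φ(x,·)
  have step1 : ∀ x : EuclideanSpace ℝ (Fin d),
      (∫ y, (⟪y, gradient (fun x' => f (x', y)) x⟫_ℝ
        + max ⟪y, gradient U x⟫_ℝ 0 * (f (x, bounce (gradient U x) y) - f (x, y))
        + lamc * ((∫ w, f (x, w) ∂μν) - f (x, y))) * G x ∂μν)
      = ∫ y, φ (x, y) ∂μν := by
    intro x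
    set g : EuclideanSpace ℝ (Fin d) := gradient U x with hg
    set c0 : ℝ := ∫ w, f (x, w) ∂μν with hc0
    -- integrability over μν of the various pieces
    have hcont_f : Continuous fun y => f (x, y) :=
      hf.continuous.comp (continuous_const.prodMk continuous_id)
    have hcont_fb : Continuous fun y => f (x, bounce g y) :=
      hf.continuous.comp (continuous_const.prodMk (continuous_bounce g))
    have hcont_inner : Continuous fun y : EuclideanSpace ℝ (Fin d) => ⟪y, g⟫_ℝ :=
      continuous_id.inner continuous_const
    have hinner_bound : ∀ y : EuclideanSpace ℝ (Fin d), ‖max ⟪y, g⟫_ℝ 0‖ ≤ ‖g‖ * ‖y‖ := by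
      intro y
      rw [Real.norm_eq_abs, abs_of_nonneg (le_max_right _ _), max_le_iff]
      constructor
      · refine (le_abs_self _).trans ?_
        refine (abs_real_inner_le_norm y g).trans ?_
        rw [mul_comm]
      · positivity
    have hIy_f : Integrable (fun y => f (x, y)) μν :=
      (integrable_const Cf).mono' hcont_f.aestronglyMeasurable
        (Filter.Eventually.of_forall fun y => hCf (x, y))
    have hIy_D : Integrable (fun y => D (x, y)) μν :=
      (hmom.const_mul Cd).mono'
        ((hD_cont.comp (continuous_const.prodMk continuous_id)).aestronglyMeasurable)
        (Filter.Eventually.of_forall fun y => hD_bound (x, y))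
    have hIy_max1 : Integrable (fun y => max ⟪y, g⟫_ℝ 0 * f (x, bounce g y)) μν := by
      refine (hmom.const_mul (‖g‖ * Cf)).mono'
        (((hcont_inner.max continuous_const).mul hcont_fb).aestronglyMeasurable)
        (Filter.Eventually.of_forall fun y => ?_)
      rw [norm_mul]
      calc ‖max ⟪y, g⟫_ℝ 0‖ * ‖f (x, bounce g y)‖ ≤ (‖g‖ * ‖y‖) * Cf :=
            mul_le_mul (hinner_bound y) (hCf _) (norm_nonneg _) (by positivity)
        _ = ‖g‖ * Cf * ‖y‖ := by ring
    have hIy_max2 : Integrable (fun y => max ⟪y, g⟫_ℝ 0 * f (x, y)) μν := by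
      refine (hmom.const_mul (‖g‖ * Cf)).mono'
        (((hcont_inner.max continuous_const).mul hcont_f).aestronglyMeasurable)
        (Filter.Eventually.of_forall fun y => ?_)
      rw [norm_mul]
      calc ‖max ⟪y, g⟫_ℝ 0‖ * ‖f (x, y)‖ ≤ (‖g‖ * ‖y‖) * Cf :=
            mul_le_mul (hinner_bound y) (hCf _) (norm_nonneg _) (by positivity)
        _ = ‖g‖ * Cf * ‖y‖ := by ring
    have hIy_max3 : Integrable (fun y => max (-⟪y, g⟫_ℝ) 0 * f (x, y)) μν := by
      refine (hmom.const_mul (‖g‖ * Cf)).mono'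
        ((((hcont_inner.neg).max continuous_const).mul hcont_f).aestronglyMeasurable)
        (Filter.Eventually.of_forall fun y => ?_)
      rw [norm_mul]
      have hb : ‖max (-⟪y, g⟫_ℝ) 0‖ ≤ ‖g‖ * ‖y‖ := by
        rw [Real.norm_eq_abs, abs_of_nonneg (le_max_right _ _), max_le_iff]
        constructor
        · refine (le_abs_self _).trans ?_
          rw [abs_neg]
          refine (abs_real_inner_le_norm y g).trans ?_
          rw [mul_comm]
        · positivity
      calc ‖max (-⟪y, g⟫_ℝ) 0‖ * ‖f (x, y)‖ ≤ (‖g‖ * ‖y‖) * Cf :=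
            mul_le_mul hb (hCf _) (norm_nonneg _) (by positivity)
        _ = ‖g‖ * Cf * ‖y‖ := by ring
    have hIy_if : Integrable (fun y => ⟪y, g⟫_ℝ * f (x, y)) μν := by
      refine (hmom.const_mul (‖g‖ * Cf)).mono'
        ((hcont_inner.mul hcont_f).aestronglyMeasurable)
        (Filter.Eventually.of_forall fun y => ?_)
      rw [norm_mul]
      calc ‖⟪y, g⟫_ℝ‖ * ‖f (x, y)‖ ≤ (‖y‖ * ‖g‖) * Cf :=
            mul_le_mul (abs_real_inner_le_norm y g) (hCf _) (norm_nonneg _) (by positivity)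
        _ = ‖g‖ * Cf * ‖y‖ := by ring
    have hIy_C : Integrable (fun y => lamc * (c0 - f (x, y))) μν :=
      (((integrable_const c0).sub hIy_f).const_mul lamc)
    -- the refreshment part integrates to zero
    have hC : ∫ y, lamc * (c0 - f (x, y)) ∂μν = 0 := by
      rw [integral_const_mul, integral_sub (integrable_const c0) hIy_f]
      simp [hc0]
    -- the bounce part: change of variables
    have hB1 : ∫ y, max ⟪y, g⟫_ℝ 0 * f (x, bounce g y) ∂μν
        = ∫ y, max (-⟪y, g⟫_ℝ) 0 * f (x, y) ∂μν := by
      by_cases hg0 : g = 0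
      · refine integral_congr_ae (Filter.Eventually.of_forall fun y => ?_)
        simp [hg0]
      · set T := (ℝ ∙ g)ᗮ.reflection with hT
        have hmap : Measure.map T μν = μν := hrot T
        have hTemb : MeasurableEmbedding (T : EuclideanSpace ℝ (Fin d) →
            EuclideanSpace ℝ (Fin d)) :=
          T.toHomeomorph.measurableEmbedding
        calc ∫ y, max ⟪y, g⟫_ℝ 0 * f (x, bounce g y) ∂μν
            = ∫ y, max ⟪y, g⟫_ℝ 0 * f (x, bounce g y) ∂(Measure.map T μν) := by rw [hmap]
          _ = ∫ y, max ⟪T y, g⟫_ℝ 0 * f (x, bounce g (T y)) ∂μν := hTemb.integral_map _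
          _ = ∫ y, max (-⟪y, g⟫_ℝ) 0 * f (x, y) ∂μν := by
              refine integral_congr_ae (Filter.Eventually.of_forall fun y => ?_)
              beta_reduce
              have e1 : ⟪(T y : EuclideanSpace ℝ (Fin d)), g⟫_ℝ = -⟪y, g⟫_ℝ := by
                rw [real_inner_comm, ← bounce_eq_reflection hg0, inner_bounce, real_inner_comm]
              have e2 : bounce g (T y) = y := by
                rw [bounce_eq_reflection hg0, hT, Submodule.reflection_reflection]
              rw [e1, e2]
      -- combine
    have hB : ∫ y, max ⟪y, g⟫_ℝ 0 * (f (x, bounce g y) - f (x, y)) ∂μν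
        = ∫ y, -(⟪y, g⟫_ℝ * f (x, y)) ∂μν := by
      calc ∫ y, max ⟪y, g⟫_ℝ 0 * (f (x, bounce g y) - f (x, y)) ∂μν
          = ∫ y, (max ⟪y, g⟫_ℝ 0 * f (x, bounce g y) - max ⟪y, g⟫_ℝ 0 * f (x, y)) ∂μν := by
            refine integral_congr_ae (Filter.Eventually.of_forall fun y => ?_)
            simp [mul_sub]
        _ = (∫ y, max ⟪y, g⟫_ℝ 0 * f (x, bounce g y) ∂μν)
            - ∫ y, max ⟪y, g⟫_ℝ 0 * f (x, y) ∂μν := integral_sub hIy_max1 hIy_max2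
        _ = (∫ y, max (-⟪y, g⟫_ℝ) 0 * f (x, y) ∂μν)
            - ∫ y, max ⟪y, g⟫_ℝ 0 * f (x, y) ∂μν := by rw [hB1]
        _ = ∫ y, (max (-⟪y, g⟫_ℝ) 0 * f (x, y) - max ⟪y, g⟫_ℝ 0 * f (x, y)) ∂μν :=
            (integral_sub hIy_max3 hIy_max2).symm
        _ = ∫ y, -(⟪y, g⟫_ℝ * f (x, y)) ∂μν := by
            refine integral_congr_ae (Filter.Eventually.of_forall fun y => ?_)
            have : max (-⟪y, g⟫_ℝ) 0 - max ⟪y, g⟫_ℝ 0 = -⟪y, g⟫_ℝ := by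
              rcases le_total (⟪y, g⟫_ℝ) 0 with h | h
              · rw [max_eq_left (neg_nonneg.mpr h), max_eq_right h, sub_zero]
              · rw [max_eq_right (neg_nonpos.mpr h), max_eq_left h, zero_sub]
            calc max (-⟪y, g⟫_ℝ) 0 * f (x, y) - max ⟪y, g⟫_ℝ 0 * f (x, y)
                = (max (-⟪y, g⟫_ℝ) 0 - max ⟪y, g⟫_ℝ 0) * f (x, y) := by ring
              _ = -(⟪y, g⟫_ℝ * f (x, y)) := by rw [this]; ring
    -- assemble the inner integral
    calc (∫ y, (⟪y, gradient (fun x' => f (x', y)) x⟫_ℝ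
          + max ⟪y, gradient U x⟫_ℝ 0 * (f (x, bounce (gradient U x) y) - f (x, y))
          + lamc * ((∫ w, f (x, w) ∂μν) - f (x, y))) * G x ∂μν)
        = (∫ y, (D (x, y)
          + max ⟪y, g⟫_ℝ 0 * (f (x, bounce g y) - f (x, y))
          + lamc * (c0 - f (x, y))) ∂μν) * G x := by
          rw [← integral_mul_const]
          refine integral_congr_ae (Filter.Eventually.of_forall fun y => ?_)
          beta_reduce
          rw [hA x y]
      _ = (((∫ y, D (x, y) ∂μν)
          + (∫ y, max ⟪y, g⟫_ℝ 0 * (f (x, bounce g y) - f (x, y)) ∂μν))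
            + ∫ y, lamc * (c0 - f (x, y)) ∂μν) * G x := by
          have hIy_B : Integrable
              (fun y => max ⟪y, g⟫_ℝ 0 * (f (x, bounce g y) - f (x, y))) μν :=
            (hIy_max1.sub hIy_max2).congr
              (Filter.Eventually.of_forall fun y => by simp [mul_sub])
          have hIy_DB : Integrable
              (fun y => D (x, y) + max ⟪y, g⟫_ℝ 0 * (f (x, bounce g y) - f (x, y))) μν :=
            hIy_D.add hIy_B
          rw [integral_add hIy_DB hIy_C, integral_add hIy_D hIy_B]
      _ = ((∫ y, D (x, y) ∂μν) + ∫ y, -(⟪y, g⟫_ℝ * f (x, y)) ∂μν) * G x := by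
          rw [hB, hC, add_zero]
      _ = (∫ y, (D (x, y) - ⟪y, g⟫_ℝ * f (x, y)) ∂μν) * G x := by
          rw [integral_neg, ← sub_eq_add_neg, ← integral_sub hIy_D hIy_if]
      _ = ∫ y, φ (x, y) ∂μν := by
          rw [← integral_mul_const]
          refine integral_congr_ae (Filter.Eventually.of_forall fun y => ?_)
          rw [hφ]
          beta_reduce
          rw [← haU x y]
  have hGle : ∀ x : EuclideanSpace ℝ (Fin d), G x ≤ (1 + ‖gradient U x‖) * G x := by
    intro x
    nlinarith [norm_nonneg (gradient U x), (hG_pos x).le,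
      mul_nonneg (norm_nonneg (gradient U x)) (hG_pos x).le]
  -- Step 2: IBP: for every y the x-integral of φ vanishes
  have step2 : ∀ y : EuclideanSpace ℝ (Fin d), (∫ x, φ (x, y)) = 0 := by
    intro y
    have hI1 : Integrable (fun x => D (x, y) * G x) := by
      refine (hUint.const_mul (Cd * ‖y‖)).mono'
        (((hD_cont.comp (continuous_id.prodMk continuous_const)).mul
          hG_cont).aestronglyMeasurable) (Filter.Eventually.of_forall fun x => ?_)
      rw [norm_mul, Real.norm_of_nonneg (hG_pos x).le]
      calc ‖D (x, y)‖ * G x ≤ (Cd * ‖y‖) * G x :=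
            mul_le_mul_of_nonneg_right (hD_bound (x, y)) (hG_pos x).le
        _ ≤ Cd * ‖y‖ * ((1 + ‖gradient U x‖) * G x) := by
            have := hGle x
            have hc : 0 ≤ Cd * ‖y‖ := mul_nonneg hCd0 (norm_nonneg y)
            nlinarith
    have hI2 : Integrable (fun x => fderiv ℝ U x y * f (x, y) * G x) := by
      refine (hUint.const_mul (Cf * ‖y‖)).mono'
        ((((isBoundedBilinearMap_apply.continuous.comp
            (hdU_cont.prodMk continuous_const)).mul
          (hf.continuous.comp (continuous_id.prodMk continuous_const))).mul
          hG_cont).aestronglyMeasurable) (Filter.Eventually.of_forall fun x => ?_)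
      rw [norm_mul, norm_mul, Real.norm_of_nonneg (hG_pos x).le]
      have h1 : ‖fderiv ℝ U x y‖ ≤ ‖gradient U x‖ * ‖y‖ := by
        rw [← hnormU]; exact (fderiv ℝ U x).le_opNorm _
      have h2 : ‖f (x, y)‖ ≤ Cf := hCf (x, y)
      have he := (hG_pos x).le
      have hn := norm_nonneg (gradient U x)
      have hy := norm_nonneg y
      have hfn := norm_nonneg (f (x, y))
      have hdn := norm_nonneg (fderiv ℝ U x y)
      calc ‖fderiv ℝ U x y‖ * ‖f (x, y)‖ * G x
          ≤ (‖gradient U x‖ * ‖y‖) * Cf * G x := by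
            apply mul_le_mul_of_nonneg_right _ he
            exact mul_le_mul h1 h2 hfn (by positivity)
        _ ≤ Cf * ‖y‖ * ((1 + ‖gradient U x‖) * G x) := by nlinarith [mul_nonneg (mul_nonneg hCf0 hy) he]
    have hI3 : Integrable (fun x => f (x, y) * G x) := by
      refine (hexp_int.const_mul Cf).mono'
        (((hf.continuous.comp (continuous_id.prodMk continuous_const)).mul
          hG_cont).aestronglyMeasurable) (Filter.Eventually.of_forall fun x => ?_)
      rw [norm_mul, Real.norm_of_nonneg (hG_pos x).le]
      exact mul_le_mul_of_nonneg_right (hCf (x, y)) (hG_pos x).le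
    have hdF : ∀ x, fderiv ℝ (fun x' => f (x', y)) x y = D (x, y) := by
      intro x
      rw [(hpart x y).fderiv]
      simp [hD]
    have hdG : ∀ x, fderiv ℝ G x y = -(fderiv ℝ U x y * G x) := by
      intro x
      rw [(hG_deriv x).fderiv]
      simp [hG]
      ring
    have hFd : Differentiable ℝ (fun x' => f (x', y)) := fun x => (hpart x y).differentiableAt
    have key := integral_mul_fderiv_eq_neg_fderiv_mul_of_integrable (μ := volume)
      (f := fun x => f (x, y)) (g := G) (v := y)
      (hI1.congr (Filter.Eventually.of_forall fun x => by beta_reduce; rw [hdF x]))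
      ((hI2.neg).congr (Filter.Eventually.of_forall fun x => by simp only [Pi.neg_apply]; rw [hdG x]; ring))
      hI3 (fun x _ => hFd x) (fun x _ => hG_diff x)
    have e1 : ∫ x, f (x, y) * fderiv ℝ G x y = - ∫ x, fderiv ℝ U x y * f (x, y) * G x := by
      rw [← integral_neg]
      exact integral_congr_ae (Filter.Eventually.of_forall fun x => by beta_reduce; rw [hdG x]; ring)
    have e2 : ∫ x, fderiv ℝ (fun x' => f (x', y)) x y * G x = ∫ x, D (x, y) * G x :=
      integral_congr_ae (Filter.Eventually.of_forall fun x => by beta_reduce; rw [hdF x])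
    have e3 : ∫ x, fderiv ℝ U x y * f (x, y) * G x = ∫ x, D (x, y) * G x := by
      have := key
      rw [e1, e2] at this
      linarith [this]
    calc (∫ x, φ (x, y))
        = ∫ x, (D (x, y) * G x - fderiv ℝ U x y * f (x, y) * G x) :=
          integral_congr_ae (Filter.Eventually.of_forall fun x => by rw [hφ]; ring)
      _ = (∫ x, D (x, y) * G x) - ∫ x, fderiv ℝ U x y * f (x, y) * G x := integral_sub hI1 hI2
      _ = 0 := by rw [e3, sub_self]
  calc (∫ x, ∫ y, (⟪y, gradient (fun x' => f (x', y)) x⟫_ℝ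
        + max ⟪y, gradient U x⟫_ℝ 0 * (f (x, bounce (gradient U x) y) - f (x, y))
        + lamc * ((∫ w, f (x, w) ∂μν) - f (x, y))) * Real.exp (-U x) ∂μν)
      = ∫ x, ∫ y, φ (x, y) ∂μν := integral_congr_ae (Filter.Eventually.of_forall fun x => step1 x)
    _ = ∫ y, (∫ x, φ (x, y)) ∂μν := integral_integral_swap hφ_int
    _ = 0 := by simp [step2]
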